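/- arXiv:1501.03074 — 3 statements merged into one kernel-verified Lean document; each statement's English description precedes it below -/
import Mathlib

section
/- Let F ⊆ G be fields of characteristic p with δ : G → G a derivation satisfying δ^p = 0 and G = F(ξ) with δ(ξ^i) = iξ^{i-1}. For 1 ≤ ℓ ≤ p, let A_ℓ ⊆ End_F(G) be the F-span of all operators Σ_{i=0}^{ℓ-1} μ_{g_i} ∘ δ^i with g_i ∈ G. Then A_ℓ · A_m = A_n where n = min(ℓ + m - 1, p) (the product being composition of endomorphisms in opposite order, i.e., in (End_F G)^op). -/
variable {F G : Type} [Field F] [Field G] [Algebra F G]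

/-- The `F`-subspace `A_ℓ ⊆ End_F(G)` spanned by the operators
`Σ_{i=0}^{ℓ-1} μ_{g_i} ∘ δ^i` with `g_i ∈ G`. -/
noncomputable def Asub (δ : Module.End F G) (ℓ : ℕ) : Submodule F (Module.End F G) :=
  Submodule.span F
    {f | ∃ g : ℕ → G, f = ∑ i ∈ Finset.range ℓ, (LinearMap.mulLeft F (g i) : Module.End F G) * δ ^ i}

lemma mem_Asub_single (δ : Module.End F G) {ℓ t : ℕ} (ht : t < ℓ) (g : G) :
    (LinearMap.mulLeft F g : Module.End F G) * δ ^ t ∈ Asub δ ℓ := by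
  apply Submodule.subset_span
  refine ⟨fun i => if i = t then g else 0, ?_⟩
  rw [Finset.sum_eq_single t]
  · simp
  · intro b _ hb
    simp [hb]
  · intro h
    exact absurd (Finset.mem_range.mpr ht) h

lemma delta_mulLeft (δ : Module.End F G)
    (hLeib : ∀ a b : G, δ (a * b) = a * δ b + δ a * b) (h : G) :
    δ * LinearMap.mulLeft F h
      = LinearMap.mulLeft F h * δ + LinearMap.mulLeft F (δ h) := by
  ext x
  simp [Module.End.mul_apply, hLeib]

lemma key_comm (δ : Module.End F G)
    (hLeib : ∀ a b : G, δ (a * b) = a * δ b + δ a * b) :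
    ∀ k h, δ ^ k * LinearMap.mulLeft F h ∈
      Submodule.span F {f : Module.End F G |
        ∃ a t, t ≤ k ∧ f = LinearMap.mulLeft F a * δ ^ t} := by
  intro k
  induction k with
  | zero =>
    intro h
    exact Submodule.subset_span ⟨h, 0, le_refl 0, by simp⟩
  | succ k ih =>
    intro h
    have hrw : δ ^ (k + 1) * LinearMap.mulLeft F h
        = δ * (δ ^ k * LinearMap.mulLeft F h) := by
      rw [pow_succ', mul_assoc]
    rw [hrw]
    refine Submodule.span_induction
      (p := fun x _ => δ * x ∈ Submodule.span F {f : Module.End F G |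
        ∃ a t, t ≤ k + 1 ∧ f = LinearMap.mulLeft F a * δ ^ t}) ?_ ?_ ?_ ?_ (ih h)
    · rintro x ⟨a, t, htk, rfl⟩
      have : δ * (LinearMap.mulLeft F a * δ ^ t)
          = LinearMap.mulLeft F a * δ ^ (t + 1) + LinearMap.mulLeft F (δ a) * δ ^ t := by
        rw [← mul_assoc, delta_mulLeft δ hLeib, add_mul, mul_assoc, ← pow_succ']
      rw [this]
      exact Submodule.add_mem _
        (Submodule.subset_span ⟨a, t + 1, by omega, rfl⟩)
        (Submodule.subset_span ⟨δ a, t, by omega, rfl⟩)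
    · simp
    · intro x y _ _ hx hy
      rw [mul_add]
      exact Submodule.add_mem _ hx hy
    · intro c x _ hx
      rw [mul_smul_comm]
      exact Submodule.smul_mem _ _ hx

/-- For `G/F` purely inseparable of degree `p` with natural derivation `δ`,
`A_ℓ · A_m = A_{min (ℓ + m - 1) p}` for `1 ≤ ℓ, m ≤ p`. -/
theorem stmt_8 (p : ℕ) (hp : p.Prime) [CharP F p] (ξ : G) (q : F)
    (hξ : ξ ^ p = algebraMap F G q)
    (hbasis : ∃ b : Module.Basis (Fin p) F G, ∀ i : Fin p, b i = ξ ^ (i : ℕ))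
    (δ : Module.End F G)
    (hLeib : ∀ a b : G, δ (a * b) = a * δ b + δ a * b)
    (hδξ : ∀ i : ℕ, i < p → δ (ξ ^ i) = (i : G) * ξ ^ (i - 1))
    (hδp : δ ^ p = 0) :
    ∀ ℓ m : ℕ, 1 ≤ ℓ → ℓ ≤ p → 1 ≤ m → m ≤ p →
      Asub δ ℓ * Asub δ m = Asub δ (min (ℓ + m - 1) p) := by
  intro ℓ m hℓ1 hℓp hm1 hmp
  set n := min (ℓ + m - 1) p with hn
  have hδhigh : ∀ t : ℕ, p ≤ t → δ ^ t = 0 := by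
    intro t hpt
    have : δ ^ t = δ ^ (t - p) * δ ^ p := by rw [← pow_add]; congr 1; omega
    rw [this, hδp, mul_zero]
  -- key single-term membership for the forward direction
  have hterm : ∀ (i j : ℕ) (g h : G), i < ℓ → j < m →
      (LinearMap.mulLeft F g : Module.End F G) * δ ^ i *
        ((LinearMap.mulLeft F h : Module.End F G) * δ ^ j) ∈ Asub δ n := by
    intro i j g h hi hj
    have hrw : (LinearMap.mulLeft F g : Module.End F G) * δ ^ i *
        ((LinearMap.mulLeft F h : Module.End F G) * δ ^ j)
        = LinearMap.mulLeft F g * (δ ^ i * LinearMap.mulLeft F h) * δ ^ j := by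
      simp only [mul_assoc]
    rw [hrw]
    refine Submodule.span_induction
      (p := fun x _ => (LinearMap.mulLeft F g : Module.End F G) * x * δ ^ j ∈ Asub δ n)
      ?_ ?_ ?_ ?_ (key_comm δ hLeib i h)
    · rintro x ⟨a, t, hti, rfl⟩
      have hrw2 : (LinearMap.mulLeft F g : Module.End F G) *
          (LinearMap.mulLeft F a * δ ^ t) * δ ^ j
          = LinearMap.mulLeft F (g * a) * δ ^ (t + j) := by
        simp only [LinearMap.mulLeft_mul, pow_add, ← Module.End.mul_eq_comp, mul_assoc]
      rw [hrw2]
      by_cases hcase : t + j < p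
      · exact mem_Asub_single δ (by omega) _
      · rw [hδhigh (t + j) (by omega), mul_zero]
        exact Submodule.zero_mem _
    · simp
    · intro x y _ _ hx hy
      have : (LinearMap.mulLeft F g : Module.End F G) * (x + y) * δ ^ j
          = LinearMap.mulLeft F g * x * δ ^ j + LinearMap.mulLeft F g * y * δ ^ j := by
        rw [mul_add, add_mul]
      rw [this]
      exact Submodule.add_mem _ hx hy
    · intro c x _ hx
      have : (LinearMap.mulLeft F g : Module.End F G) * (c • x) * δ ^ j
          = c • (LinearMap.mulLeft F g * x * δ ^ j) := by
        rw [mul_smul_comm, smul_mul_assoc]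
      rw [this]
      exact Submodule.smul_mem _ _ hx
  apply le_antisymm
  · rw [Asub, Asub, Submodule.span_mul_span]
    rw [Submodule.span_le]
    rintro x ⟨f, hf, f', hf', rfl⟩
    obtain ⟨g, rfl⟩ := hf
    obtain ⟨h, rfl⟩ := hf'
    beta_reduce
    rw [SetLike.mem_coe, Finset.sum_mul_sum]
    refine Submodule.sum_mem _ fun i hi => Submodule.sum_mem _ fun j hj => ?_
    exact hterm i j (g i) (h j) (Finset.mem_range.mp hi) (Finset.mem_range.mp hj)
  · rw [show Asub δ n = Submodule.span F
      {f | ∃ g : ℕ → G, f = ∑ i ∈ Finset.range n,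
        (LinearMap.mulLeft F (g i) : Module.End F G) * δ ^ i} from rfl, Submodule.span_le]
    rintro x ⟨g, rfl⟩
    refine Submodule.sum_mem _ fun k hk => ?_
    have hk' : k < n := Finset.mem_range.mp hk
    set i := min k (ℓ - 1) with hi
    set j := k - i with hj
    have hiℓ : i < ℓ := by omega
    have hjm : j < m := by omega
    have hij : i + j = k := by omega
    have hrw : (LinearMap.mulLeft F (g k) : Module.End F G) * δ ^ k
        = (LinearMap.mulLeft F (g k) * δ ^ i) *
          ((LinearMap.mulLeft F (1 : G) : Module.End F G) * δ ^ j) := by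
      rw [LinearMap.mulLeft_one, ← Module.End.one_eq_id, one_mul, ← hij, pow_add]
      simp only [mul_assoc]
    rw [hrw]
    exact Submodule.mul_mem_mul (mem_Asub_single δ hiℓ _) (mem_Asub_single δ hjm _)
end

section
/- Let C be a full subcategory of Mod-Λ closed under isomorphisms and submodules. A pair of morphisms M →^u E →^v N in C is an exact pair (i.e., both Hom(W,-) and Hom(-,W) applied to it yield exact sequences 0 → Hom(W,M) → Hom(W,E) → Hom(W,N) and 0 → Hom(N,W) → Hom(E,W) → Hom(M,W) for all W ∈ C) if and only if 0 → M → E → N → 0 is an exact sequence of Λ-modules. -/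
/-- For a full subcategory `𝒞` of `Mod-Λ` closed under isomorphisms and submodules,
a pair of morphisms `M →ᵘ E →ᵛ N` in `𝒞` is an exact pair (both `Hom(W,-)` and
`Hom(-,W)` yield exact sequences for all `W ∈ 𝒞`) iff `0 → M → E → N → 0` is an
exact sequence of `Λ`-modules. -/
theorem stmt_17 (K Λ : Type) [Field K] [Ring Λ] [Algebra K Λ] [FiniteDimensional K Λ]
    (𝒞 : ∀ (M : Type) [AddCommGroup M] [Module Λᵐᵒᵖ M], Prop)
    (hiso : ∀ (M N : Type) [AddCommGroup M] [Module Λᵐᵒᵖ M] [AddCommGroup N]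
      [Module Λᵐᵒᵖ N], 𝒞 M → (M ≃ₗ[Λᵐᵒᵖ] N) → 𝒞 N)
    (hsub : ∀ (M : Type) [AddCommGroup M] [Module Λᵐᵒᵖ M], 𝒞 M →
      ∀ N : Submodule Λᵐᵒᵖ M, 𝒞 ↥N)
    (M E N : Type)
    [AddCommGroup M] [Module Λᵐᵒᵖ M] [AddCommGroup E] [Module Λᵐᵒᵖ E]
    [AddCommGroup N] [Module Λᵐᵒᵖ N]
    (hM : 𝒞 M) (hE : 𝒞 E) (hN : 𝒞 N)
    (u : M →ₗ[Λᵐᵒᵖ] E) (v : E →ₗ[Λᵐᵒᵖ] N) :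
    (∀ (W : Type) [AddCommGroup W] [Module Λᵐᵒᵖ W], 𝒞 W →
      ((∀ f : W →ₗ[Λᵐᵒᵖ] M, u ∘ₗ f = 0 → f = 0) ∧
       (∀ g : W →ₗ[Λᵐᵒᵖ] E, v ∘ₗ g = 0 ↔ ∃ f : W →ₗ[Λᵐᵒᵖ] M, g = u ∘ₗ f) ∧
       (∀ f : N →ₗ[Λᵐᵒᵖ] W, f ∘ₗ v = 0 → f = 0) ∧
       (∀ g : E →ₗ[Λᵐᵒᵖ] W, g ∘ₗ u = 0 ↔ ∃ f : N →ₗ[Λᵐᵒᵖ] W, g = f ∘ₗ v)))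
    ↔
    (Function.Injective u ∧ LinearMap.range u = LinearMap.ker v ∧ Function.Surjective v) := by
  constructor
  · intro h
    -- v ∘ u = 0
    have hvu : v ∘ₗ u = 0 := by
      obtain ⟨-, h2, -, -⟩ := h M hM
      exact (h2 u).mpr ⟨LinearMap.id, by ext x; rfl⟩
    have hvu' : ∀ m, v (u m) = 0 := fun m => congrFun (congrArg DFunLike.coe hvu) m
    -- injectivity of u
    have hinj : Function.Injective u := by
      obtain ⟨h1, -, -, -⟩ := h ↥(LinearMap.ker u) (hsub M hM (LinearMap.ker u))
      have := h1 (LinearMap.ker u).subtype (by ext ⟨x, hx⟩; exact hx)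
      rw [← LinearMap.ker_eq_bot, Submodule.eq_bot_iff]
      intro x hx
      simpa using congrFun (congrArg DFunLike.coe this) ⟨x, hx⟩
    refine ⟨hinj, ?_, ?_⟩
    · -- range u = ker v
      apply le_antisymm
      · rintro _ ⟨m, rfl⟩
        exact hvu' m
      · intro x hx
        obtain ⟨-, h2, -, -⟩ := h ↥(LinearMap.ker v) (hsub E hE (LinearMap.ker v))
        obtain ⟨f, hf⟩ := (h2 (LinearMap.ker v).subtype).mp (by ext ⟨y, hy⟩; exact hy)
        refine ⟨f ⟨x, hx⟩, ?_⟩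
        exact (congrFun (congrArg DFunLike.coe hf) ⟨x, hx⟩).symm
    · -- surjectivity of v
      set X := LinearMap.range v with hX
      have hXC : 𝒞 ↥X := hsub N hN X
      obtain ⟨-, -, -, h4⟩ := h ↥X hXC
      have hcr : (v.codRestrict X (fun e => ⟨e, rfl⟩)) ∘ₗ u = 0 := by
        apply LinearMap.ext; intro m
        apply Subtype.ext
        exact hvu' m
      obtain ⟨f, hf⟩ := (h4 (v.codRestrict X (fun e => ⟨e, rfl⟩))).mp hcr
      obtain ⟨-, -, h3, -⟩ := h N hN
      have key : X.subtype ∘ₗ f - LinearMap.id = 0 := by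
        apply h3
        ext e
        have h1 := congrFun (congrArg DFunLike.coe hf) e
        simp only [LinearMap.sub_comp, LinearMap.sub_apply, LinearMap.coe_comp,
          Function.comp_apply, LinearMap.id_comp, LinearMap.zero_apply,
          Submodule.coe_subtype, LinearMap.id_apply, sub_eq_zero]
        exact (congrArg Subtype.val h1).symm
      intro n
      have : (f n : N) = n := by
        have := congrFun (congrArg DFunLike.coe key) n
        simpa [sub_eq_zero] using this
      exact this ▸ (f n).2
  · rintro ⟨hinj, hrk, hsurj⟩ W _ _ _
    refine ⟨?_, ?_, ?_, ?_⟩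
    · intro f hf
      ext w
      exact hinj (by simpa using congrFun (congrArg DFunLike.coe hf) w)
    · intro g
      constructor
      · intro hg
        have hgr : ∀ w, g w ∈ LinearMap.range u := by
          intro w
          rw [hrk]
          exact congrFun (congrArg DFunLike.coe hg) w
        refine ⟨(LinearEquiv.ofInjective u hinj).symm.toLinearMap ∘ₗ
          g.codRestrict (LinearMap.range u) hgr, ?_⟩
        ext w
        have : u ((LinearEquiv.ofInjective u hinj).symm ⟨g w, hgr w⟩) = g w := by
          have := (LinearEquiv.ofInjective u hinj).apply_symm_apply ⟨g w, hgr w⟩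
          exact congrArg Subtype.val this
        exact this.symm
      · rintro ⟨f, rfl⟩
        ext w
        have : u (f w) ∈ LinearMap.ker v := hrk ▸ LinearMap.mem_range_self u (f w)
        simpa using this
    · intro f hf
      ext n
      obtain ⟨e, rfl⟩ := hsurj n
      exact congrFun (congrArg DFunLike.coe hf) e
    · intro g
      constructor
      · intro hg
        have hker : LinearMap.ker v ≤ LinearMap.ker g := by
          rw [← hrk]
          rintro _ ⟨m, rfl⟩
          exact congrFun (congrArg DFunLike.coe hg) m
        refine ⟨((LinearMap.ker v).liftQ g hker) ∘ₗ
          (v.quotKerEquivOfSurjective hsurj).symm.toLinearMap, ?_⟩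
        ext e
        have h1 : (v.quotKerEquivOfSurjective hsurj).symm (v e) =
            Submodule.Quotient.mk e := by
          apply (v.quotKerEquivOfSurjective hsurj).injective
          rw [LinearEquiv.apply_symm_apply]
          rfl
        simp only [LinearMap.coe_comp, Function.comp_apply, LinearEquiv.coe_coe, h1]
        rfl
      · rintro ⟨f, rfl⟩
        ext m
        have : u m ∈ LinearMap.ker v := hrk ▸ LinearMap.mem_range_self u m
        simp only [LinearMap.coe_comp, Function.comp_apply, LinearMap.zero_apply]
        rw [LinearMap.mem_ker.mp this, map_zero]
end

section
/- Let Λ be an algebra with decomposition Λ = S ⊕ J (S semisimple subalgebra, J the radical), {p_i, γ_i} a dual basis of the left S-module J with γ_i ∈ *J = Hom_S(J, S). Define the comultiplication μ : *J → *J ⊗_S *J by μ(γ) = Σ_{i,j} γ_i ⊗ γ_j·γ(p_j p_i). Then μ is coassociative: (μ ⊗ id)∘μ = (id ⊗ μ)∘μ. -/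
/-- The realization of a simple tensor `α ⊗ β ⊗ δ ∈ *J ⊗_S *J ⊗_S *J` as an
`S`-valued trilinear functional on `J`, iterating the identification
`Φ(ρ ⊗ ν)(a ⊗ b) = ν(a·ρ(b))`. -/
def realize {S J : Type} [Ring S] [AddCommGroup J] [Module Sᵐᵒᵖ J]
    (α β δ : J → S) (a b c : J) : S :=
  δ (MulOpposite.op (β (MulOpposite.op (α c) • b)) • a)

/-- Coassociativity of the comultiplication `μ(γ) = Σ_{i,j} γ_i ⊗ γ_j·γ(p_j p_i)`
on `*J = Hom_S(J,S)`, for `J` the radical of `Λ = S ⊕ J` with dual basis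
`{p_i, γ_i}` of the left `S`-module `J`:  `(μ ⊗ id)∘μ = (id ⊗ μ)∘μ`, stated via
the canonical realization of triple tensors as `S`-valued trilinear functionals. -/
theorem stmt_18 (S J : Type) [Ring S] [AddCommGroup J]
    [Module S J] [Module Sᵐᵒᵖ J] [SMulCommClass S Sᵐᵒᵖ J]
    (m : J → J → J)
    (hadd1 : ∀ x y z : J, m (x + y) z = m x z + m y z)
    (hadd2 : ∀ x y z : J, m x (y + z) = m x y + m x z)
    (hsl : ∀ (s : S) (x y : J), m (s • x) y = s • m x y)
    (hsr : ∀ (s : Sᵐᵒᵖ) (x y : J), m x (s • y) = s • m x y)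
    (hbal : ∀ (s : S) (x y : J), m (MulOpposite.op s • x) y = m x (s • y))
    (hassoc : ∀ x y z : J, m (m x y) z = m x (m y z))
    (n : ℕ) (p : Fin n → J) (γ : Fin n → (J →ₗ[S] S))
    (hdual : ∀ w : J, ∑ i, γ i w • p i = w) :
    ∀ (ν : J →ₗ[S] S) (a b c : J),
      (∑ i, ∑ j, ∑ r, ∑ t,
        realize (fun x => γ r x)
          (fun x => γ t x * γ i (m (p t) (p r)))
          (fun x => γ j x * ν (m (p j) (p i))) a b c) =
      (∑ i, ∑ j, ∑ r, ∑ t,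
        realize (fun x => γ i x) (fun x => γ r x)
          (fun x => γ t x * (γ j (m (p t) (p r)) * ν (m (p j) (p i)))) a b c) := by
  intro ν a b c
  simp only [realize]
  -- additivity of m in each argument as AddMonoidHoms
  have madd2 : ∀ (A : J) (g : Fin n → J), m A (∑ t, g t) = ∑ t, m A (g t) := by
    intro A g
    exact map_sum (AddMonoidHom.mk' (fun y => m A y) (fun u v => hadd2 A u v)) g Finset.univ
  -- key lemma: collapse a sum against the dual basis with a linear functional
  have key : ∀ (L : J →ₗ[S] S) (x : J), (∑ j, γ j x * L (p j)) = L x := by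
    intro L x
    calc (∑ j, γ j x * L (p j)) = ∑ j, L (γ j x • p j) := by
          refine Finset.sum_congr rfl fun j _ => ?_
          rw [map_smul, smul_eq_mul]
      _ = L (∑ j, γ j x • p j) := (map_sum L _ _).symm
      _ = L x := by rw [hdual]
  have key2 : ∀ (f : J →ₗ[S] S) (A x : J), (∑ i, f (m A (γ i x • p i))) = f (m A x) := by
    intro f A x
    rw [← map_sum, ← madd2, hdual]
  -- specialized linear functionals
  have Lν : ∀ i : Fin n, ∃ L : J →ₗ[S] S, ∀ x, L x = ν (m x (p i)) := by
    intro i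
    exact ⟨{ toFun := fun x => ν (m x (p i))
             map_add' := fun u v => by simp [hadd1]
             map_smul' := fun s u => by simp [hsl] }, fun x => rfl⟩
  have Lγ : ∀ (j r : Fin n), ∃ L : J →ₗ[S] S, ∀ x, L x = γ j (m x (p r)) := by
    intro j r
    exact ⟨{ toFun := fun x => γ j (m x (p r))
             map_add' := fun u v => by simp [hadd1]
             map_smul' := fun s u => by simp [hsl] }, fun x => rfl⟩
  have keyν : ∀ (i : Fin n) (x : J), (∑ j, γ j x * ν (m (p j) (p i))) = ν (m x (p i)) := by
    intro i x
    obtain ⟨L, hL⟩ := Lν i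
    calc (∑ j, γ j x * ν (m (p j) (p i))) = ∑ j, γ j x * L (p j) := by
          simp only [hL]
      _ = L x := key L x
      _ = ν (m x (p i)) := hL x
  have keyγ : ∀ (j r : Fin n) (x : J), (∑ t, γ t x * γ j (m (p t) (p r))) = γ j (m x (p r)) := by
    intro j r x
    obtain ⟨L, hL⟩ := Lγ j r
    calc (∑ t, γ t x * γ j (m (p t) (p r))) = ∑ t, γ t x * L (p t) := by simp only [hL]
      _ = L x := key L x
      _ = γ j (m x (p r)) := hL x
  have key2ν : ∀ (A x : J), (∑ i, ν (m A (γ i x • p i))) = ν (m A x) := fun A x => key2 ν A x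
  have key2Lν : ∀ (r : Fin n) (A x : J),
      (∑ t, ν (m (m A (γ t x • p t)) (p r))) = ν (m (m A x) (p r)) := by
    intro r A x
    obtain ⟨L, hL⟩ := Lν r
    calc (∑ t, ν (m (m A (γ t x • p t)) (p r))) = ∑ t, L (m A (γ t x • p t)) := by
          simp only [hL]
      _ = L (m A x) := key2 L A x
      _ = ν (m (m A x) (p r)) := hL _
  have key2γ : ∀ (j : Fin n) (A x : J), (∑ r, γ j (m A (γ r x • p r))) = γ j (m A x) :=
    fun j A x => key2 (γ j) A x
  -- opposite scalar manipulations
  have hop : ∀ (s1 s2 : S) (x : J),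
      MulOpposite.op (s1 * s2) • x = MulOpposite.op s2 • (MulOpposite.op s1 • x) := by
    intro s1 s2 x
    rw [MulOpposite.op_mul, mul_smul]
  -- final value
  have final : ∀ w : Fin n, ν (m (m a (MulOpposite.op (γ w c) • b)) (p w)) =
      ν (m (m a b) (γ w c • p w)) := by
    intro w
    rw [hsr, hbal]
  -- LHS
  have hLHS : (∑ i, ∑ j, ∑ r, ∑ t,
      γ j (MulOpposite.op (γ t (MulOpposite.op (γ r c) • b) * γ i (m (p t) (p r))) • a) *
        ν (m (p j) (p i))) = ν (m (m a b) c) := by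
    calc (∑ i, ∑ j, ∑ r, ∑ t,
        γ j (MulOpposite.op (γ t (MulOpposite.op (γ r c) • b) * γ i (m (p t) (p r))) • a) *
          ν (m (p j) (p i)))
        = ∑ i, ∑ r, ∑ t, ∑ j,
            γ j (MulOpposite.op (γ t (MulOpposite.op (γ r c) • b) * γ i (m (p t) (p r))) • a) *
              ν (m (p j) (p i)) := by
          refine Finset.sum_congr rfl fun i _ => ?_
          rw [Finset.sum_comm]
          exact Finset.sum_congr rfl fun r _ => Finset.sum_comm
      _ = ∑ i, ∑ r, ∑ t,
            ν (m (MulOpposite.op (γ t (MulOpposite.op (γ r c) • b) * γ i (m (p t) (p r))) • a)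
              (p i)) := by
          refine Finset.sum_congr rfl fun i _ => Finset.sum_congr rfl fun r _ =>
            Finset.sum_congr rfl fun t _ => keyν i _
      _ = ∑ r, ∑ t, ∑ i,
            ν (m (MulOpposite.op (γ t (MulOpposite.op (γ r c) • b)) • a)
              (γ i (m (p t) (p r)) • p i)) := by
          rw [Finset.sum_comm]
          refine Finset.sum_congr rfl fun r _ => ?_
          rw [Finset.sum_comm]
          refine Finset.sum_congr rfl fun t _ => Finset.sum_congr rfl fun i _ => ?_
          rw [hop, hbal]
      _ = ∑ r, ∑ t,
            ν (m (MulOpposite.op (γ t (MulOpposite.op (γ r c) • b)) • a) (m (p t) (p r))) := by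
          refine Finset.sum_congr rfl fun r _ => Finset.sum_congr rfl fun t _ => key2ν _ _
      _ = ∑ r, ∑ t,
            ν (m (m a (γ t (MulOpposite.op (γ r c) • b) • p t)) (p r)) := by
          refine Finset.sum_congr rfl fun r _ => Finset.sum_congr rfl fun t _ => ?_
          rw [← hassoc, hbal]
      _ = ∑ r, ν (m (m a (MulOpposite.op (γ r c) • b)) (p r)) := by
          exact Finset.sum_congr rfl fun r _ => key2Lν r a _
      _ = ∑ r, ν (m (m a b) (γ r c • p r)) :=
          Finset.sum_congr rfl fun r _ => final r
      _ = ν (m (m a b) c) := key2ν (m a b) c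
  have hRHS : (∑ i, ∑ j, ∑ r, ∑ t,
      γ t (MulOpposite.op (γ r (MulOpposite.op (γ i c) • b)) • a) *
        (γ j (m (p t) (p r)) * ν (m (p j) (p i)))) = ν (m (m a b) c) := by
    calc (∑ i, ∑ j, ∑ r, ∑ t,
        γ t (MulOpposite.op (γ r (MulOpposite.op (γ i c) • b)) • a) *
          (γ j (m (p t) (p r)) * ν (m (p j) (p i))))
        = ∑ i, ∑ j, ∑ r,
            γ j (m (MulOpposite.op (γ r (MulOpposite.op (γ i c) • b)) • a) (p r)) *
              ν (m (p j) (p i)) := by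
          refine Finset.sum_congr rfl fun i _ => Finset.sum_congr rfl fun j _ =>
            Finset.sum_congr rfl fun r _ => ?_
          calc (∑ t, γ t (MulOpposite.op (γ r (MulOpposite.op (γ i c) • b)) • a) *
                (γ j (m (p t) (p r)) * ν (m (p j) (p i))))
              = (∑ t, γ t (MulOpposite.op (γ r (MulOpposite.op (γ i c) • b)) • a) *
                  γ j (m (p t) (p r))) * ν (m (p j) (p i)) := by
                rw [Finset.sum_mul]
                exact Finset.sum_congr rfl fun t _ => (mul_assoc _ _ _).symm
            _ = γ j (m (MulOpposite.op (γ r (MulOpposite.op (γ i c) • b)) • a) (p r)) *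
                  ν (m (p j) (p i)) := by rw [keyγ]
      _ = ∑ i, ∑ j,
            γ j (m a (MulOpposite.op (γ i c) • b)) * ν (m (p j) (p i)) := by
          refine Finset.sum_congr rfl fun i _ => Finset.sum_congr rfl fun j _ => ?_
          calc (∑ r, γ j (m (MulOpposite.op (γ r (MulOpposite.op (γ i c) • b)) • a) (p r)) *
                ν (m (p j) (p i)))
              = (∑ r, γ j (m a (γ r (MulOpposite.op (γ i c) • b) • p r))) *
                  ν (m (p j) (p i)) := by
                rw [Finset.sum_mul]
                exact Finset.sum_congr rfl fun r _ => by rw [hbal]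
            _ = γ j (m a (MulOpposite.op (γ i c) • b)) * ν (m (p j) (p i)) := by
                rw [key2γ]
      _ = ∑ i, ν (m (m a (MulOpposite.op (γ i c) • b)) (p i)) :=
          Finset.sum_congr rfl fun i _ => keyν i _
      _ = ∑ i, ν (m (m a b) (γ i c • p i)) := Finset.sum_congr rfl fun i _ => final i
      _ = ν (m (m a b) c) := key2ν (m a b) c
  rw [hLHS, hRHS]
end
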